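/- Let ⁿ2 denote the n-th tetration of 2 (⁰2 = 1, ⁿ2 = 2^(ⁿ⁻¹2)). Then e · Σ_{k=1}^∞ (ᵏ2) · exp(-(ᵏ⁻¹2)) < 5. -/

import Mathlib

open Real

/-- The `n`-th tetration of 2: `tet 0 = 1`, `tet (n+1) = 2 ^ tet n`. -/
def tet : ℕ → ℕ
  | 0 => 1
  | n + 1 => 2 ^ tet n

lemma tet_succ (n : ℕ) : tet (n + 1) = 2 ^ tet n := rfl

lemma tet_pos (k : ℕ) : 1 ≤ tet k := by
  cases k with
  | zero => simp [tet]
  | succ n => rw [tet_succ]; exact Nat.one_le_two_pow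

lemma le_tet (k : ℕ) : k ≤ tet k := by
  induction k with
  | zero => simp [tet]
  | succ n ih =>
    rw [tet_succ]
    have := Nat.lt_two_pow_self (n := tet n)
    omega

lemma two_mul_le_pow (m : ℕ) (hm : 1 ≤ m) : 2 * m ≤ 2 ^ m := by
  induction m with
  | zero => omega
  | succ n ih =>
    rcases Nat.lt_or_ge n 1 with h | h
    · interval_cases n <;> simp [pow_succ]
    · have := ih h
      rw [pow_succ]
      omega

lemma four_mul_le_tet (k : ℕ) : 4 * (k + 4) ≤ tet (k + 4) := by
  induction k with
  | zero => norm_num [tet]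
  | succ n ih =>
    have h1 : 2 * tet (n + 4) ≤ 2 ^ tet (n + 4) := two_mul_le_pow _ (tet_pos _)
    have h2 : tet (n + 1 + 4) = 2 ^ tet (n + 4) := tet_succ _
    omega

lemma f_eq (k : ℕ) : (tet (k + 1) : ℝ) * Real.exp (-(tet k : ℝ)) =
    Real.exp ((Real.log 2 - 1) * tet k) := by
  rw [tet_succ]
  push_cast
  rw [sub_mul, one_mul, Real.exp_sub, mul_comm (Real.log 2), Real.exp_nat_mul,
    Real.exp_log (by norm_num : (0:ℝ) < 2)]
  rw [Real.exp_neg]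
  ring

lemma f_le (k : ℕ) : Real.exp ((Real.log 2 - 1) * tet k) ≤ Real.exp (Real.log 2 - 1) ^ k := by
  rw [← Real.exp_nat_mul]
  apply Real.exp_le_exp.mpr
  have hlog : Real.log 2 - 1 < 0 := by
    have := Real.log_two_lt_d9; linarith
  have h : (k : ℝ) ≤ tet k := by exact_mod_cast le_tet k
  nlinarith

lemma hsum : Summable (fun k : ℕ => (tet (k + 1) : ℝ) * Real.exp (-(tet k : ℝ))) := by
  have hlog : Real.log 2 - 1 < 0 := by
    have := Real.log_two_lt_d9; linarith
  apply Summable.of_nonneg_of_le (fun k => by positivity) (fun k => ?_)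
    (summable_geometric_of_lt_one (Real.exp_pos _).le (Real.exp_lt_one_iff.mpr hlog))
  rw [f_eq]; exact f_le k

lemma tail_le (k : ℕ) : (tet (k + 4 + 1) : ℝ) * Real.exp (-(tet (k + 4) : ℝ)) ≤
    Real.exp (-1) ^ (k + 4) := by
  rw [f_eq, ← Real.exp_nat_mul]
  apply Real.exp_le_exp.mpr
  have h1 : Real.log 2 < 0.75 := by have := Real.log_two_lt_d9; linarith
  have h2 : (4 * (k + 4 : ℕ) : ℝ) ≤ tet (k + 4) := by exact_mod_cast four_mul_le_tet k
  push_cast at h2 ⊢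
  nlinarith [h2]

/-- `e · Σ_{k=1}^∞ (ᵏ2) · exp(-(ᵏ⁻¹2)) < 5` (and the series converges). -/
theorem stmt4 :
    Summable (fun k : ℕ => (tet (k + 1) : ℝ) * Real.exp (-(tet k : ℝ))) ∧
    Real.exp 1 * ∑' k : ℕ, (tet (k + 1) : ℝ) * Real.exp (-(tet k : ℝ)) < 5 := by
  refine ⟨hsum, ?_⟩
  set r : ℝ := Real.exp (-1) with hr_def
  have hr_pos : 0 < r := Real.exp_pos _
  have hr1 : r < 1 := Real.exp_lt_one_iff.mpr (by norm_num)
  have hE : Real.exp 1 * r = 1 := by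
    rw [hr_def, ← Real.exp_add]; norm_num
  have hEpos : 0 < Real.exp 1 := Real.exp_pos _
  have hrle : r < 0.371 := by
    have h27 : (2.7 : ℝ) < Real.exp 1 := by
      have := Real.exp_one_gt_d9; linarith
    nlinarith [mul_lt_mul_of_pos_left h27 hr_pos]
  have hsplit := Summable.sum_add_tsum_nat_add 4 hsum
  have htail_summable : Summable (fun k : ℕ => (tet (k + 4 + 1) : ℝ) *
      Real.exp (-(tet (k + 4) : ℝ))) := (summable_nat_add_iff 4).mpr hsum
  have hgeo : Summable (fun k : ℕ => r ^ (k + 4)) := by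
    simpa [pow_add] using (summable_geometric_of_lt_one hr_pos.le hr1).mul_right (r ^ 4)
  have htail : (∑' k : ℕ, (tet (k + 4 + 1) : ℝ) * Real.exp (-(tet (k + 4) : ℝ))) ≤
      2 * r ^ 4 := by
    have h1 : (∑' k : ℕ, (tet (k + 4 + 1) : ℝ) * Real.exp (-(tet (k + 4) : ℝ))) ≤
        ∑' k : ℕ, r ^ (k + 4) := Summable.tsum_le_tsum tail_le htail_summable hgeo
    have h2 : (∑' k : ℕ, r ^ (k + 4)) = (1 - r)⁻¹ * r ^ 4 := by
      simp_rw [pow_add]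
      rw [tsum_mul_right, tsum_geometric_of_lt_one hr_pos.le hr1]
    have h3 : (1 - r)⁻¹ ≤ 2 := by
      rw [inv_le_iff_one_le_mul₀ (by linarith)]
      linarith
    have h4 : (1 - r)⁻¹ * r ^ 4 ≤ 2 * r ^ 4 :=
      mul_le_mul_of_nonneg_right h3 (by positivity)
    linarith
  have e2 : Real.exp (-2 : ℝ) = r ^ 2 := by
    rw [hr_def, show (-2:ℝ) = ((2:ℕ):ℝ) * (-1) by norm_num, Real.exp_nat_mul]
  have e4 : Real.exp (-4 : ℝ) = r ^ 4 := by
    rw [hr_def, show (-4:ℝ) = ((4:ℕ):ℝ) * (-1) by norm_num, Real.exp_nat_mul]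
  have e16 : Real.exp (-16 : ℝ) = r ^ 16 := by
    rw [hr_def, show (-16:ℝ) = ((16:ℕ):ℝ) * (-1) by norm_num, Real.exp_nat_mul]
  have hhead : (∑ i ∈ Finset.range 4, (tet (i + 1) : ℝ) * Real.exp (-(tet i : ℝ))) =
      2 * r + 4 * r ^ 2 + 16 * r ^ 4 + 65536 * r ^ 16 := by
    rw [Finset.sum_range_succ, Finset.sum_range_succ, Finset.sum_range_succ,
      Finset.sum_range_succ, Finset.sum_range_zero]
    norm_num [tet, e2, e4, e16, hr_def]
  have hle : (∑' k : ℕ, (tet (k + 1) : ℝ) * Real.exp (-(tet k : ℝ))) ≤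
      2 * r + 4 * r ^ 2 + 18 * r ^ 4 + 65536 * r ^ 16 := by
    rw [← hsplit, hhead]; linarith
  have hmul : Real.exp 1 * (2 * r + 4 * r ^ 2 + 18 * r ^ 4 + 65536 * r ^ 16) =
      2 + 4 * r + 18 * r ^ 3 + 65536 * r ^ 15 := by
    have : Real.exp 1 * (2 * r + 4 * r ^ 2 + 18 * r ^ 4 + 65536 * r ^ 16) =
        (Real.exp 1 * r) * (2 + 4 * r + 18 * r ^ 3 + 65536 * r ^ 15) := by ring
    rw [this, hE, one_mul]
  have p3 : r ^ 3 ≤ (0.371 : ℝ) ^ 3 := pow_le_pow_left₀ hr_pos.le hrle.le 3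
  have p15 : r ^ 15 ≤ (0.371 : ℝ) ^ 15 := pow_le_pow_left₀ hr_pos.le hrle.le 15
  have n3 : (0.371 : ℝ) ^ 3 ≤ 0.0511 := by norm_num
  have n15 : (0.371 : ℝ) ^ 15 ≤ 0.0000004 := by norm_num
  calc Real.exp 1 * ∑' k : ℕ, (tet (k + 1) : ℝ) * Real.exp (-(tet k : ℝ))
      ≤ Real.exp 1 * (2 * r + 4 * r ^ 2 + 18 * r ^ 4 + 65536 * r ^ 16) :=
        mul_le_mul_of_nonneg_left hle hEpos.le
    _ = 2 + 4 * r + 18 * r ^ 3 + 65536 * r ^ 15 := hmul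
    _ < 5 := by nlinarith
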